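/- Let (φ,Q,ξ,η,g) be a weak almost contact metric structure on a real vector space V such that Q X = λ·X for all X ∈ D = ker η, where λ > 0 is a real constant. Define φ' := λ^{-1/2}·φ and the bilinear form g'(X,Y) := λ^{1/2}·(g(X,Y) - η(X)η(Y)) + η(X)η(Y). Then g' is an inner product on V, η(X) = g'(X,ξ), g'(φ'X,φ'Y) = g'(X,Y) - η(X)η(Y) for all X,Y ∈ V (so g' is compatible with the almost contact structure (φ',ξ,η)), and moreover g'(X,φ'Y) = g(X,φY) for all X,Y ∈ V. -/

import Mathlib

open scoped RealInnerProductSpace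

noncomputable section

theorem weak_almost_contact_metric_rescaled_structure
    {V : Type*} [NormedAddCommGroup V] [InnerProductSpace ℝ V]
    (φ Q : V →ₗ[ℝ] V) (hQ : Function.Bijective Q)
    (ξ : V) (η : V →ₗ[ℝ] ℝ) (ν : ℝ) (hν : 0 < ν)
    (hφφ : ∀ X, φ (φ X) = -(Q X) + η X • Q ξ)
    (hηξ : η ξ = 1)
    (hQξ : Q ξ = ν • ξ)
    (hD : ∀ X, η X = 0 → η (φ X) = 0)
    (hcompat : ∀ X Y, ⟪φ X, φ Y⟫ = ⟪X, Q Y⟫ - η X * η (Q Y))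
    (l : ℝ) (hl : 0 < l) (hQD : ∀ X, η X = 0 → Q X = l • X)
    :
    (∀ X Y, Real.sqrt l * (⟪X, Y⟫ - η X * η Y) + η X * η Y =
      Real.sqrt l * (⟪Y, X⟫ - η Y * η X) + η Y * η X) ∧
    (∀ X, X ≠ 0 → 0 < Real.sqrt l * (⟪X, X⟫ - η X * η X) + η X * η X) ∧
    (∀ X, η X = Real.sqrt l * (⟪X, ξ⟫ - η X * η ξ) + η X * η ξ) ∧
    (∀ X Y, Real.sqrt l * (⟪(Real.sqrt l)⁻¹ • φ X, (Real.sqrt l)⁻¹ • φ Y⟫ -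
        η ((Real.sqrt l)⁻¹ • φ X) * η ((Real.sqrt l)⁻¹ • φ Y)) +
        η ((Real.sqrt l)⁻¹ • φ X) * η ((Real.sqrt l)⁻¹ • φ Y) =
      (Real.sqrt l * (⟪X, Y⟫ - η X * η Y) + η X * η Y) - η X * η Y) ∧
    (∀ X Y, Real.sqrt l * (⟪X, (Real.sqrt l)⁻¹ • φ Y⟫ - η X * η ((Real.sqrt l)⁻¹ • φ Y)) +
        η X * η ((Real.sqrt l)⁻¹ • φ Y) = ⟪X, φ Y⟫) := by
  have hsl : 0 < Real.sqrt l := Real.sqrt_pos.mpr hl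
  have hsl2 : Real.sqrt l * Real.sqrt l = l := Real.mul_self_sqrt hl.le
  have hξne : ξ ≠ 0 := by
    intro h; rw [h, map_zero] at hηξ; norm_num at hηξ
  -- Step A: φ ξ = 0
  have hφφξ : φ (φ ξ) = 0 := by
    rw [hφφ, hηξ, one_smul, neg_add_cancel]
  have hφξ : φ ξ = 0 := by
    have h1 : φ (φ (φ ξ)) = -(Q (φ ξ)) + η (φ ξ) • Q ξ := hφφ (φ ξ)
    rw [hφφξ, map_zero] at h1
    have h2 : Q (φ ξ) = Q (η (φ ξ) • ξ) := by
      rw [map_smul]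
      linear_combination (norm := module) h1
    have h3 : φ ξ = η (φ ξ) • ξ := hQ.1 h2
    obtain ⟨c, hc⟩ : ∃ c : ℝ, η (φ ξ) = c := ⟨_, rfl⟩
    rw [hc] at h3
    have h4 : (0 : V) = (c * c) • ξ := by
      calc (0 : V) = φ (φ ξ) := hφφξ.symm
        _ = φ (c • ξ) := by rw [h3]
        _ = c • φ ξ := map_smul φ c ξ
        _ = c • (c • ξ) := by rw [h3]
        _ = (c * c) • ξ := smul_smul c c ξ
    have h6 : c = 0 := by
      by_contra h
      rcases smul_eq_zero.mp h4.symm with h' | h'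
      · exact (mul_ne_zero h h) h'
      · exact hξne h'
    rw [h3, h6, zero_smul]
  -- Step B: ⟪ξ,ξ⟫ = 1
  have hξξ : ⟪ξ, ξ⟫ = 1 := by
    have := hcompat ξ ξ
    rw [hφξ, inner_zero_left, hQξ, real_inner_smul_right, map_smul, hηξ] at this
    simp only [smul_eq_mul, mul_one] at this
    nlinarith
  -- Step C: ⟪X, ξ⟫ = η X
  have hXξ : ∀ X, ⟪X, ξ⟫ = η X := by
    intro X
    have := hcompat X ξ
    rw [hφξ, inner_zero_right, hQξ, real_inner_smul_right, map_smul, hηξ] at this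
    simp only [smul_eq_mul, mul_one] at this
    nlinarith
  -- Step D: η (φ X) = 0
  have hηφ : ∀ X, η (φ X) = 0 := by
    intro X
    have hd : η (X - η X • ξ) = 0 := by
      simp [map_sub, map_smul, hηξ]
    have := hD _ hd
    rwa [map_sub, map_smul, hφξ, smul_zero, sub_zero] at this
  -- Step E: Q X formula
  have hQX : ∀ X, Q X = (ν * η X) • ξ + l • (X - η X • ξ) := by
    intro X
    have hd : η (X - η X • ξ) = 0 := by simp [map_sub, map_smul, hηξ]
    have h1 := hQD _ hd
    have h0 : Q X = Q (η X • ξ) + Q (X - η X • ξ) := by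
      rw [← map_add]; congr 1; abel
    rw [h0, h1, map_smul, hQξ, smul_smul, mul_comm]
  -- Step F: key identity
  have hkey : ∀ X Y, ⟪φ X, φ Y⟫ = l * (⟪X, Y⟫ - η X * η Y) := by
    intro X Y
    have h1 := hcompat X Y
    rw [hQX Y] at h1
    rw [h1]
    rw [inner_add_right, real_inner_smul_right, real_inner_smul_right,
      inner_sub_right, real_inner_smul_right, hXξ, map_add, map_smul, map_smul,
      map_sub, map_smul, hηξ]
    simp only [smul_eq_mul, mul_one]
    ring
  refine ⟨?_, ?_, ?_, ?_, ?_⟩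
  · intro X Y
    rw [real_inner_comm]; ring
  · intro X hX
    have hnξ : ‖ξ‖ ^ 2 = 1 := by rw [← real_inner_self_eq_norm_sq, hξξ]
    have h2 : ‖η X • ξ‖ ^ 2 = η X * η X := by
      rw [norm_smul, mul_pow, hnξ, mul_one, Real.norm_eq_abs, sq_abs]; ring
    have hCS : ⟪X, X⟫ - η X * η X = ‖X - η X • ξ‖ ^ 2 := by
      rw [real_inner_self_eq_norm_sq, norm_sub_sq_real, h2,
        real_inner_smul_right, hXξ]
      ring
    by_cases h : η X = 0
    · have hpos : 0 < ⟪X, X⟫ := by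
        rw [real_inner_self_eq_norm_sq]
        have := norm_pos_iff.mpr hX
        positivity
      rw [h]
      nlinarith
    · have hnn : 0 ≤ ⟪X, X⟫ - η X * η X := by
        rw [hCS]; positivity
      nlinarith [mul_self_pos.mpr h]
  · intro X
    rw [hXξ, hηξ]; ring
  · intro X Y
    rw [real_inner_smul_left, real_inner_smul_right, map_smul, map_smul,
      hηφ, hηφ, hkey]
    simp only [smul_eq_mul, mul_zero, zero_mul, sub_zero, add_zero]
    rw [← hsl2]; field_simp
    rw [Real.sqrt_sq hsl.le]; ring
  · intro X Y
    rw [real_inner_smul_right, map_smul, hηφ]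
    simp only [smul_eq_mul, mul_zero, sub_zero, add_zero]
    rw [← mul_assoc, mul_inv_cancel₀ hsl.ne', one_mul]
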